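/- arXiv:1505.03395 — 4 statements merged into one kernel-verified Lean document; each statement's English description precedes it below -/
import Mathlib

section
/- Let κ < μ < λ be infinite regular cardinals. The forcing 𝕊^λ_{κ,μ}, whose conditions are functions s : (γ_s + 1) → 2 with γ_s < λ such that the set {α ≤ γ_s : s(α) = 1} is contained in the points of λ of cofinality κ and is non-stationary in β for every β ≤ γ_s of cofinality at least μ, ordered by reverse inclusion, is μ-directed closed. -/
/-- A is unbounded in β. -/
def unbIn (A : Set Ordinal) (β : Ordinal) : Prop :=
  ∀ α < β, ∃ γ ∈ A, α ≤ γ ∧ γ < β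

/-- A is closed in β: it contains each of its limit points below β. -/
def closedIn (A : Set Ordinal) (β : Ordinal) : Prop :=
  ∀ δ < β, Order.IsSuccLimit δ → unbIn A δ → δ ∈ A

/-- A is a club (closed unbounded subset) in β. -/
def clubIn (A : Set Ordinal) (β : Ordinal) : Prop :=
  A ⊆ Set.Iio β ∧ unbIn A β ∧ closedIn A β

/-- S is stationary in β: S meets every club in β. -/
def statIn (S : Set Ordinal) (β : Ordinal) : Prop :=
  ∀ C : Set Ordinal, clubIn C β → (S ∩ C).Nonempty

/-- A condition of the forcing 𝕊^λ_{κ,μ}, represented as a pair p = (γ_p, A_p) coding the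
function s : (γ_p + 1) → 2 with A_p = {α ≤ γ_p : s(α) = 1}: we require γ_p < λ, that A_p
consists of ordinals ≤ γ_p of cofinality κ, and that A_p is non-stationary in every
β ≤ γ_p of cofinality at least μ. -/
def SCond (lam kap mu : Cardinal) (p : Ordinal × Set Ordinal) : Prop :=
  p.1 < lam.ord ∧ (∀ α ∈ p.2, α ≤ p.1 ∧ α.cof = kap) ∧
  ∀ β ≤ p.1, mu ≤ β.cof → ¬ statIn p.2 β

/-- The ordering of 𝕊^λ_{κ,μ} (reverse inclusion of the corresponding functions):
q ≤ p iff the function coded by q extends the function coded by p. -/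
def SLe (q p : Ordinal × Set Ordinal) : Prop :=
  p.1 ≤ q.1 ∧ q.2 ∩ Set.Iic p.1 = p.2

/-- For infinite regular cardinals κ < μ < λ, the forcing 𝕊^λ_{κ,μ} is μ-directed
closed: every directed set of conditions of size < μ has a lower bound. -/
theorem stmt4 (kap mu lam : Cardinal)
    (hk : kap.IsRegular) (hm : mu.IsRegular) (hl : lam.IsRegular)
    (hkm : kap < mu) (hml : mu < lam)
    (D : Set (Ordinal × Set Ordinal))
    (hDcond : ∀ p ∈ D, SCond lam kap mu p)
    (hDdir : ∀ p ∈ D, ∀ q ∈ D, ∃ r ∈ D, SLe r p ∧ SLe r q)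
    (hDsize : Cardinal.mk ↥D < Cardinal.lift.{1, 0} mu) :
    ∃ r : Ordinal × Set Ordinal, SCond lam kap mu r ∧ ∀ p ∈ D, SLe r p := by

  have hmu0 : Cardinal.aleph0 ≤ mu := hm.aleph0_le
  rcases D.eq_empty_or_nonempty with hD | hD
  · refine ⟨(0, ∅), ⟨?_, by simp, ?_⟩, ?_⟩
    · rw [Cardinal.lt_ord]
      simpa using (Cardinal.aleph0_pos.trans_le hl.aleph0_le)
    · intro β hβ hcof
      have hβ0 : β = 0 := le_antisymm hβ (zero_le (a := β))
      subst hβ0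
      rw [Ordinal.cof_zero] at hcof
      exact absurd hcof (Cardinal.aleph0_pos.trans_le hmu0).not_ge
    · intro p hp
      simp [hD] at hp
  -- agreement lemma from directedness
  have agree : ∀ p ∈ D, ∀ q ∈ D, ∀ α ∈ q.2, α ≤ p.1 → α ∈ p.2 := by
    intro p hp q hq α hα hle
    obtain ⟨s, _, ⟨_, hsp⟩, ⟨_, hsq⟩⟩ := hDdir p hp q hq
    rw [← hsq] at hα
    rw [← hsp]
    exact ⟨hα.1, hle⟩
  haveI hsmall : Small.{0} ↥D := by
    rw [Cardinal.small_iff_lift_mk_lt_univ, Cardinal.lift_id]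
    exact hDsize.trans (Cardinal.lift_lt_univ mu)
  set ι := Shrink.{0} ↥D with hι
  haveI : Nonempty ι := ⟨equivShrink ↥D ⟨hD.choose, hD.choose_spec⟩⟩
  set g : ι → Ordinal := fun i => (((equivShrink ↥D).symm i : ↥D) : Ordinal × Set Ordinal).1
    with hg
  have hcard : Cardinal.mk ι < mu := by
    have h2 := Cardinal.lift_mk_shrink'' ↥D
    rw [← h2] at hDsize
    exact Cardinal.lift_lt.mp hDsize
  have hglt : ∀ i, g i < lam.ord := fun i =>
    (hDcond _ ((equivShrink ↥D).symm i).2).1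
  set γr : Ordinal := iSup g with hγr
  have hγlt : γr < lam.ord := by
    refine Ordinal.iSup_lt_ord ?_ hglt
    rw [hl.cof_eq]
    exact hcard.trans hml
  have hle_sup : ∀ p ∈ D, p.1 ≤ γr := by
    intro p hp
    have h1 : p.1 = g (equivShrink ↥D ⟨p, hp⟩) := by simp [hg]
    rw [h1]
    exact Ordinal.le_iSup g _
  set A : Set Ordinal := ⋃ p ∈ D, p.2 with hA
  have hmemA : ∀ α ∈ A, ∃ p ∈ D, α ∈ p.2 := by
    intro α hα
    simpa [hA] using hα
  refine ⟨(γr, A), ⟨hγlt, ?_, ?_⟩, ?_⟩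
  · intro α hα
    obtain ⟨p, hp, hαp⟩ := hmemA α hα
    obtain ⟨h1, h2⟩ := (hDcond p hp).2.1 α hαp
    exact ⟨h1.trans (hle_sup p hp), h2⟩
  · intro β hβ hcof
    by_cases hcase : ∃ p ∈ D, β ≤ p.1
    · obtain ⟨p, hp, hβp⟩ := hcase
      have hns := (hDcond p hp).2.2 β hβp hcof
      intro hstat
      apply hns
      intro C hC
      obtain ⟨α, hαA, hαC⟩ := hstat C hC
      obtain ⟨q, hq, hαq⟩ := hmemA α hαA
      have hαβ : α < β := hC.1 hαC
      exact ⟨α, agree p hp q hq α hαq (hαβ.le.trans hβp), hαC⟩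
    · push_neg at hcase
      exfalso
      have hβγ : β = γr := by
        refine le_antisymm hβ (Ordinal.iSup_le fun i => ?_)
        exact (hcase _ ((equivShrink ↥D).symm i).2).le
      have h1 : γr.cof ≤ Cardinal.mk ι := by
        refine Ordinal.cof_iSup_le fun i => ?_
        have := hcase _ ((equivShrink ↥D).symm i).2
        rw [hβγ] at this
        exact this
      rw [hβγ] at hcof
      exact absurd (hcof.trans h1) hcard.not_ge
  · intro p hp
    refine ⟨hle_sup p hp, ?_⟩
    ext α
    constructor
    · rintro ⟨hαA, hαle⟩
      obtain ⟨q, hq, hαq⟩ := hmemA α hαA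
      exact agree p hp q hq α hαq hαle
    · intro hα
      exact ⟨Set.mem_biUnion hp hα, ((hDcond p hp).2.1 α hα).1⟩
end

section
/- Let λ be a regular uncountable cardinal with λ^{<λ} = λ, and let a⃗ = ⟨a_α : α < λ⟩ be a fixed enumeration of all bounded subsets of λ. Then for B ⊆ λ, B ∈ I[λ] if and only if there is a club C ⊆ λ such that every element of B ∩ C is approachable with respect to a⃗. -/
/-- a is a bounded subset of λ. -/
def bddSubset (lam : Cardinal) (a : Set Ordinal) : Prop :=
  ∃ β < lam.ord, a ⊆ Set.Iio β

/-- The order type of a set of ordinals. -/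
noncomputable def otp (A : Set Ordinal) : Ordinal.{1} :=
  Ordinal.type (Subrel ((· < ·) : Ordinal → Ordinal → Prop) (· ∈ A))

/-- γ is approachable with respect to the sequence a⃗ = ⟨a_α⟩: there is an unbounded
A ⊆ γ of order type cf(γ) all of whose proper initial segments appear as some a_α with
α < γ. -/
def ApproachableWrt (a : Ordinal → Set Ordinal) (γ : Ordinal) : Prop :=
  ∃ A : Set Ordinal, A ⊆ Set.Iio γ ∧ unbIn A γ ∧
    otp A = Ordinal.lift.{1, 0} γ.cof.ord ∧
    ∀ β < γ, ∃ α < γ, A ∩ Set.Iio β = a α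

/-- B belongs to the approachability ideal I[λ]: B ⊆ λ and there are a club C ⊆ λ and a
sequence a⃗ of bounded subsets of λ such that every element of B ∩ C is approachable with
respect to a⃗. -/
def InApproachIdeal (lam : Cardinal) (B : Set Ordinal) : Prop :=
  B ⊆ Set.Iio lam.ord ∧
  ∃ (C : Set Ordinal) (a : Ordinal → Set Ordinal),
    clubIn C lam.ord ∧ (∀ α, bddSubset lam (a α)) ∧
    ∀ γ ∈ B ∩ C, ApproachableWrt a γ

section Aux

open Ordinal

/-- sup of a nat-indexed strictly increasing family of ordinals below `lam.ord`,
basic facts. -/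
private lemma sup_nat_lt_ord {lam : Cardinal.{0}} (hunc : Cardinal.aleph0 < lam)
    (hreg : lam.IsRegular) {g : ℕ → Ordinal.{0}} (hg : ∀ n, g n < lam.ord) :
    ⨆ n, g n < lam.ord := by
  apply Ordinal.iSup_lt_of_lt_cof _ hg
  rwa [Cardinal.mk_nat, hreg.cof_eq]

private lemma isLimit_sup_of_strictMono {g : ℕ → Ordinal.{0}}
    (hmono : ∀ n, g n < g (n + 1)) : Order.IsSuccLimit (⨆ n, g n) := by
  rw [Ordinal.isSuccLimit_iff]
  constructor
  · intro h0
    have := (hmono 0).trans_le (Ordinal.le_iSup g 1)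
    rw [h0] at this
    exact absurd this zero_le.not_gt
  · apply Order.isSuccPrelimit_of_succ_lt
    intro a ha
    obtain ⟨n, hn⟩ := Ordinal.lt_iSup_iff.1 ha
    calc Order.succ a ≤ g n := Order.succ_le_of_lt hn
      _ < g (n + 1) := hmono n
      _ ≤ ⨆ n, g n := Ordinal.le_iSup g (n + 1)

/-- Intersection of two clubs in λ is a club (λ regular uncountable). -/
lemma clubIn_inter {lam : Cardinal.{0}} (hreg : lam.IsRegular) (hunc : Cardinal.aleph0 < lam)
    {C D : Set Ordinal} (hC : clubIn C lam.ord) (hD : clubIn D lam.ord) :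
    clubIn (C ∩ D) lam.ord := by
  obtain ⟨hCs, hCu, hCc⟩ := hC
  obtain ⟨hDs, hDu, hDc⟩ := hD
  have hlim : Order.IsSuccLimit lam.ord := Cardinal.isSuccLimit_ord hreg.aleph0_le
  refine ⟨fun x hx => hCs hx.1, ?_, ?_⟩
  · -- unbounded
    intro α hα
    -- one step: jump into C then D
    have step : ∀ x < lam.ord, ∃ y < lam.ord, x < y ∧
        (∃ c ∈ C, x < c ∧ c ≤ y) ∧ ∃ d ∈ D, x < d ∧ d ≤ y := by
      intro x hx
      obtain ⟨c, hcC, hxc, hclt⟩ := hCu (Order.succ x) (hlim.succ_lt hx)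
      obtain ⟨d, hdD, hcd, hdlt⟩ := hDu (Order.succ c) (hlim.succ_lt hclt)
      have hxc' : x < c := Order.succ_le_iff.1 hxc
      have hcd' : c < d := Order.succ_le_iff.1 hcd
      exact ⟨d, hdlt, hxc'.trans hcd', ⟨c, hcC, hxc', le_of_lt hcd'⟩,
        ⟨d, hdD, hxc'.trans hcd', le_rfl⟩⟩
    choose F hFlt hFgt hFC hFD using step
    -- iterate
    let g : ℕ → {x : Ordinal // x < lam.ord} := fun n =>
      Nat.rec ⟨α, hα⟩ (fun _ p => ⟨F p.1 p.2, hFlt p.1 p.2⟩) n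
    have hgm : ∀ n, (g n).1 < (g (n + 1)).1 := fun n => hFgt (g n).1 (g n).2
    set δ := ⨆ n, (g n).1 with hδ
    have hδlt : δ < lam.ord := sup_nat_lt_ord hunc hreg (fun n => (g n).2)
    have hδlim := isLimit_sup_of_strictMono hgm
    have hle : ∀ n, (g n).1 < δ := fun n =>
      lt_of_lt_of_le (hgm n) (Ordinal.le_iSup _ (n + 1))
    have hCuδ : unbIn C δ := by
      intro x hx
      obtain ⟨n, hn⟩ := Ordinal.lt_iSup_iff.1 hx
      obtain ⟨c, hcC, hgc, hcle⟩ := hFC (g n).1 (g n).2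
      exact ⟨c, hcC, le_of_lt (hn.trans hgc), lt_of_le_of_lt hcle (hle (n + 1))⟩
    have hDuδ : unbIn D δ := by
      intro x hx
      obtain ⟨n, hn⟩ := Ordinal.lt_iSup_iff.1 hx
      obtain ⟨d, hdD, hgd, hdle⟩ := hFD (g n).1 (g n).2
      exact ⟨d, hdD, le_of_lt (hn.trans hgd), lt_of_le_of_lt hdle (hle (n + 1))⟩
    exact ⟨δ, ⟨hCc δ hδlt hδlim hCuδ, hDc δ hδlt hδlim hDuδ⟩, le_of_lt (hle 0), hδlt⟩
  · -- closed
    intro δ hδ hlimδ hu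
    have hCuδ : unbIn C δ := fun x hx => by
      obtain ⟨y, hy, h1, h2⟩ := hu x hx; exact ⟨y, hy.1, h1, h2⟩
    have hDuδ : unbIn D δ := fun x hx => by
      obtain ⟨y, hy, h1, h2⟩ := hu x hx; exact ⟨y, hy.2, h1, h2⟩
    exact ⟨hCc δ hδ hlimδ hCuδ, hDc δ hδ hlimδ hDuδ⟩

/-- The set of closure points of a function `f : Ordinal → Ordinal` bounded below λ
is a club in λ (λ regular uncountable). -/
lemma clubIn_closurePoints {lam : Cardinal.{0}} (hreg : lam.IsRegular)
    (hunc : Cardinal.aleph0 < lam) {f : Ordinal → Ordinal} (hf : ∀ x, f x < lam.ord) :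
    clubIn {γ | γ < lam.ord ∧ ∀ ξ < γ, f ξ < γ} lam.ord := by
  have hlim : Order.IsSuccLimit lam.ord := Cardinal.isSuccLimit_ord hreg.aleph0_le
  refine ⟨fun x hx => hx.1, ?_, ?_⟩
  · intro α hα
    have step : ∀ x < lam.ord, ∃ y < lam.ord, x < y ∧ ∀ ξ < x, f ξ < y := by
      intro x hx
      refine ⟨max (Order.succ x) (Ordinal.bsup x (fun ξ _ => Order.succ (f ξ))), ?_, ?_, ?_⟩
      · apply max_lt (hlim.succ_lt hx)
        apply Ordinal.bsup_lt_ord _ (fun ξ _ => hlim.succ_lt (hf ξ))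
        rw [hreg.cof_eq]
        exact Cardinal.lt_ord.1 hx
      · exact lt_of_lt_of_le (Order.lt_succ x) (le_max_left _ _)
      · intro ξ hξ
        calc f ξ < Order.succ (f ξ) := Order.lt_succ _
          _ ≤ Ordinal.bsup x (fun ξ _ => Order.succ (f ξ)) := Ordinal.le_bsup _ ξ hξ
          _ ≤ _ := le_max_right _ _
    choose F hFlt hFgt hFcl using step
    let g : ℕ → {x : Ordinal // x < lam.ord} := fun n =>
      Nat.rec ⟨α, hα⟩ (fun _ p => ⟨F p.1 p.2, hFlt p.1 p.2⟩) n
    have hgm : ∀ n, (g n).1 < (g (n + 1)).1 := fun n => hFgt (g n).1 (g n).2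
    set δ := ⨆ n, (g n).1 with hδ
    have hδlt : δ < lam.ord := sup_nat_lt_ord hunc hreg (fun n => (g n).2)
    have hle : ∀ n, (g n).1 < δ := fun n =>
      lt_of_lt_of_le (hgm n) (Ordinal.le_iSup _ (n + 1))
    refine ⟨δ, ⟨hδlt, ?_⟩, le_of_lt (hle 0), hδlt⟩
    intro ξ hξ
    obtain ⟨n, hn⟩ := Ordinal.lt_iSup_iff.1 hξ
    exact lt_of_lt_of_le (hFcl (g n).1 (g n).2 ξ hn) (le_of_lt (hle (n + 1)))
  · intro δ hδ hlimδ hu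
    refine ⟨hδ, fun ξ hξ => ?_⟩
    obtain ⟨d, hd, h1, h2⟩ := hu (Order.succ ξ) (hlimδ.succ_lt hξ)
    exact lt_of_lt_of_le (hd.2 ξ (lt_of_lt_of_le (Order.lt_succ ξ) h1)) (le_of_lt h2)

end Aux

/-- Let λ be regular uncountable with λ^{<λ} = λ, and let a⃗ be a fixed enumeration of
all bounded subsets of λ.  Then for B ⊆ λ, B ∈ I[λ] if and only if there is a club C ⊆ λ
such that every element of B ∩ C is approachable with respect to a⃗. -/
theorem stmt8 (lam : Cardinal) (hreg : lam.IsRegular) (hunc : Cardinal.aleph0 < lam)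
    (hpow : lam ^< lam = lam)
    (a : Ordinal → Set Ordinal)
    (hbdd : ∀ α, bddSubset lam (a α))
    (henum : ∀ b : Set Ordinal, bddSubset lam b → ∃ α < lam.ord, a α = b) :
    ∀ B : Set Ordinal, B ⊆ Set.Iio lam.ord →
      (InApproachIdeal lam B ↔
        ∃ C : Set Ordinal, clubIn C lam.ord ∧ ∀ γ ∈ B ∩ C, ApproachableWrt a γ) := by
  intro B hB
  constructor
  · rintro ⟨-, C', b, hC', hbddb, happ⟩
    -- translate indices of b into indices of a
    have hsel : ∀ α, ∃ β < lam.ord, a β = b α := fun α => henum (b α) (hbddb α)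
    choose f hflt hfeq using hsel
    -- the club of closure points of f
    set D := {γ | γ < lam.ord ∧ ∀ ξ < γ, f ξ < γ} with hD
    have hDclub : clubIn D lam.ord := clubIn_closurePoints hreg hunc hflt
    refine ⟨C' ∩ D, clubIn_inter hreg hunc hC' hDclub, ?_⟩
    rintro γ ⟨hγB, hγC', hγD⟩
    obtain ⟨A, hAsub, hAunb, hAotp, hAinit⟩ := happ γ ⟨hγB, hγC'⟩
    refine ⟨A, hAsub, hAunb, hAotp, fun β hβ => ?_⟩
    obtain ⟨α, hαγ, hα⟩ := hAinit β hβ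
    exact ⟨f α, hγD.2 α hαγ, by rw [hfeq, hα]⟩
  · rintro ⟨C, hC, h⟩
    exact ⟨hB, C, a, hC, hbdd, h⟩
end

section
/- Let κ be a singular strong limit cardinal of countable cofinality. Then there exists a normal, subadditive function d : [κ⁺]² → ω. -/
open Set Cardinal Ordinal

namespace Stmt11Aux

variable (g : Ordinal → Ordinal → Ordinal) (s : ℕ → Ordinal)

/-- The basic generating set attached to `β` at level `n`. -/
def base (n : ℕ) (β : Ordinal) : Set Ordinal := g β '' Set.Iio (s n)

/-- Stages of the closure of `base n β` under `γ ↦ base n γ`. -/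
def iter (n : ℕ) (β : Ordinal) : ℕ → Set Ordinal
  | 0 => base g s n β
  | m + 1 => iter n β m ∪ ⋃ γ ∈ iter n β m, base g s n γ

/-- The closure of `base n β` under `γ ↦ base n γ`. -/
def C (n : ℕ) (β : Ordinal) : Set Ordinal := ⋃ m, iter g s n β m

theorem base_subset_C (n : ℕ) (β : Ordinal) : base g s n β ⊆ C g s n β :=
  Set.subset_iUnion (iter g s n β) 0

theorem iter_subset_C (n : ℕ) (β : Ordinal) (m : ℕ) : iter g s n β m ⊆ C g s n β :=
  Set.subset_iUnion (iter g s n β) m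

theorem C_closed {n : ℕ} {β γ : Ordinal} (h : γ ∈ C g s n β) :
    base g s n γ ⊆ C g s n β := by
  obtain ⟨_, ⟨m, rfl⟩, hm⟩ := h
  refine subset_trans ?_ (iter_subset_C g s n β (m + 1))
  intro x hx
  exact Or.inr (Set.mem_biUnion hm hx)

theorem C_minimal {n : ℕ} {β : Ordinal} {S : Set Ordinal}
    (h0 : base g s n β ⊆ S) (hcl : ∀ γ ∈ S, base g s n γ ⊆ S) :
    C g s n β ⊆ S := by
  refine Set.iUnion_subset fun m => ?_
  induction m with
  | zero => exact h0
  | succ m ih =>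
    intro x hx
    rcases hx with hx | hx
    · exact ih hx
    · obtain ⟨γ, hγ, hxγ⟩ := Set.mem_iUnion₂.mp hx
      exact hcl γ (ih hγ) hxγ

theorem C_trans {n : ℕ} {α β : Ordinal} (h : α ∈ C g s n β) :
    C g s n α ⊆ C g s n β :=
  C_minimal g s (C_closed g s h) fun _ hγ => C_closed g s hγ

theorem base_mono (hs : Monotone s) {n n' : ℕ} (h : n ≤ n') (β : Ordinal) :
    base g s n β ⊆ base g s n' β :=
  Set.image_mono (Set.Iio_subset_Iio (hs h))

theorem C_mono (hs : Monotone s) {n n' : ℕ} (h : n ≤ n') (β : Ordinal) :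
    C g s n β ⊆ C g s n' β := by
  refine Set.iUnion_subset fun m => ?_
  induction m with
  | zero => exact (base_mono g s hs h β).trans (base_subset_C g s n' β)
  | succ m ih =>
    intro x hx
    rcases hx with hx | hx
    · exact ih hx
    · obtain ⟨γ, hγ, hxγ⟩ := Set.mem_iUnion₂.mp hx
      exact C_closed g s (ih hγ) (base_mono g s hs h γ hxγ)

theorem mk_C_le {n : ℕ} {ℓ : Cardinal.{1}} (hℓ : ℵ₀ ≤ ℓ)
    (hb : ∀ β : Ordinal, #(base g s n β) ≤ ℓ) (β : Ordinal) :
    #(C g s n β) ≤ ℓ := by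
  have hiter : ∀ m, #(iter g s n β m) ≤ ℓ := by
    intro m
    induction m with
    | zero => exact hb β
    | succ m ih =>
      calc #(iter g s n β (m + 1)) ≤ #(iter g s n β m) + #(⋃ γ ∈ iter g s n β m, base g s n γ) :=
            mk_union_le _ _
        _ ≤ ℓ + #(iter g s n β m) * ⨆ γ : iter g s n β m, #(base g s n γ.1) :=
            add_le_add ih (mk_biUnion_le _ _)
        _ ≤ ℓ + ℓ * ℓ :=
            add_le_add le_rfl (mul_le_mul' ih (ciSup_le' fun γ => hb γ.1))
        _ = ℓ := by rw [mul_eq_self hℓ, add_eq_self hℓ]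
  calc #(C g s n β) ≤ Cardinal.lift.{1} #ℕ * ⨆ m, #(iter g s n β m) := by
        simpa [C] using mk_iUnion_le_lift (iter g s n β)
    _ ≤ ℵ₀ * ℓ := by
        refine mul_le_mul' (by simp) (ciSup_le' hiter)
    _ ≤ ℓ * ℓ := by gcongr
    _ = ℓ := mul_eq_self hℓ

open Classical in
/-- The distance function. -/
noncomputable def dfn (α β : Ordinal) : ℕ :=
  if h : ∃ n, α ∈ C g s n β then Nat.find h else 0

open Classical in
theorem dfn_le {n : ℕ} {α β : Ordinal} (h : α ∈ C g s n β) : dfn g s α β ≤ n := by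
  rw [dfn, dif_pos ⟨n, h⟩]
  exact Nat.find_le h

open Classical in
theorem mem_of_dfn_le (hs : Monotone s) {n : ℕ} {α β : Ordinal}
    (hex : ∃ m, α ∈ C g s m β) (h : dfn g s α β ≤ n) : α ∈ C g s n β := by
  rw [dfn, dif_pos hex] at h
  exact C_mono g s hs h β (Nat.find_spec hex)

end Stmt11Aux

/-- d : [κ⁺]² → ω is normal: for every β < κ⁺ and n < ω, the set
{α < β : d(α,β) ≤ n} has cardinality less than κ. -/
def NormalFn (kap : Cardinal) (d : Ordinal → Ordinal → ℕ) : Prop :=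
  ∀ β < (Order.succ kap).ord, ∀ n : ℕ,
    Cardinal.mk {α : Ordinal // α < β ∧ d α β ≤ n} < Cardinal.lift.{1, 0} kap

/-- d : [κ⁺]² → ω is subadditive: d(α,γ) ≤ max(d(α,β), d(β,γ)) for α < β < γ < κ⁺. -/
def SubadditiveFn (kap : Cardinal) (d : Ordinal → Ordinal → ℕ) : Prop :=
  ∀ α β γ : Ordinal, α < β → β < γ → γ < (Order.succ kap).ord →
    d α γ ≤ max (d α β) (d β γ)

/-- If κ is a singular strong limit cardinal of countable cofinality, then there exists a
normal, subadditive function d : [κ⁺]² → ω. -/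
theorem stmt11 (kap : Cardinal) (hsl : kap.IsStrongLimit)
    (hcof : kap.ord.cof = Cardinal.aleph0) (hsing : Cardinal.aleph0 < kap) :
    ∃ d : Ordinal → Ordinal → ℕ, NormalFn kap d ∧ SubadditiveFn kap d := by
  classical
  set K := kap.ord with hKdef
  have hκ0 : ℵ₀ ≤ kap := hsing.le
  have hKlim : Order.IsSuccLimit K := Cardinal.isSuccLimit_ord hκ0
  -- a cofinal ℕ-sequence in K
  obtain ⟨ι, f0, hlsub, hmkι⟩ := Ordinal.exists_lsub_cof K
  rw [hcof] at hmkι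
  have hne : Nonempty (ℕ ≃ ι) := Cardinal.eq.mp (by rw [hmkι, Cardinal.mk_denumerable])
  obtain ⟨e⟩ := hne
  set f : ℕ → Ordinal := f0 ∘ e with hfdef
  set s : ℕ → Ordinal := fun n => (Finset.range (n + 1)).sup f + 1 with hsdef
  have hsmono : Monotone s := by
    intro a b hab
    have h : (Finset.range (a + 1)).sup f ≤ (Finset.range (b + 1)).sup f :=
      Finset.sup_mono (Finset.range_subset_range.mpr (by omega))
    simpa [hsdef] using add_le_add_right h 1
  have hsK : ∀ n, s n < K := by
    intro n
    have hsup : (Finset.range (n + 1)).sup f < K := by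
      refine (Finset.sup_lt_iff (by simpa using hKlim.pos)).mpr fun i _ => ?_
      rw [← hlsub]
      exact Ordinal.lt_lsub f0 (e i)
    have h := hKlim.succ_lt hsup
    show _ + 1 < K
    rw [Ordinal.add_one_eq_succ]
    exact h
  have hscof : ∀ x < K, ∃ n, x < s n := by
    intro x hx
    rw [← hlsub] at hx
    obtain ⟨i, hi⟩ := Ordinal.lt_lsub_iff.mp hx
    refine ⟨e.symm i, ?_⟩
    have h1 : f (e.symm i) = f0 i := by simp [hfdef]
    have h2 : f (e.symm i) ≤ (Finset.range (e.symm i + 1)).sup f :=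
      Finset.le_sup (Finset.mem_range.mpr (by omega))
    have h3 : x ≤ (Finset.range (e.symm i + 1)).sup f := le_trans (h1 ▸ hi) h2
    have h4 : (Finset.range (e.symm i + 1)).sup f < s (e.symm i) := by
      rw [hsdef]
      simp only [Ordinal.add_one_eq_succ]
      exact Order.lt_succ _
    exact h3.trans_lt h4
  -- the pointwise surjections
  have hgex : ∀ β : Ordinal, ∃ gb : Ordinal → Ordinal,
      β < (Order.succ kap).ord → ∀ x < β, ∃ i < K, gb i = x := by
    intro β
    rcases eq_or_lt_of_le (zero_le (a := β)) with h0 | h0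
    · exact ⟨fun _ => 0, fun _ x hx => absurd hx (by simp [← h0])⟩
    by_cases hβ : β < (Order.succ kap).ord
    · have hcard : β.card ≤ kap := Order.lt_succ_iff.mp (Cardinal.lt_ord.mp hβ)
      have hmk : #(Set.Iio β) ≤ #(Set.Iio K) := by
        rw [Ordinal.mk_Iio_ordinal, Ordinal.mk_Iio_ordinal, Cardinal.lift_le, Cardinal.card_ord]
        exact hcard
      obtain ⟨emb⟩ := Cardinal.le_def _ _ |>.mp hmk
      haveI : Nonempty (Set.Iio β) := ⟨⟨0, h0⟩⟩
      have hsurj := Function.invFun_surjective emb.injective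
      refine ⟨fun i => if h : i ∈ Set.Iio K then ((Function.invFun emb ⟨i, h⟩ : Set.Iio β) : Ordinal)
        else 0, fun _ x hx => ?_⟩
      obtain ⟨j, hj⟩ := hsurj ⟨x, hx⟩
      refine ⟨j.1, j.2, ?_⟩
      beta_reduce
      rw [dif_pos j.2, Subtype.eta, hj]
    · exact ⟨fun _ => 0, fun h => absurd h hβ⟩
  choose g hg using hgex
  -- totality
  have htot : ∀ α β : Ordinal, α < β → β < (Order.succ kap).ord →
      ∃ n, α ∈ Stmt11Aux.C g s n β := by
    intro α β hαβ hβ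
    obtain ⟨i, hiK, hgi⟩ := hg β hβ α hαβ
    obtain ⟨n, hn⟩ := hscof i hiK
    exact ⟨n, Stmt11Aux.base_subset_C g s n β ⟨i, Set.mem_Iio.mpr hn, hgi⟩⟩
  refine ⟨Stmt11Aux.dfn g s, ?_, ?_⟩
  · -- NormalFn
    intro β hβ n
    set ℓ : Cardinal.{1} := Cardinal.lift.{1} (ℵ₀ ⊔ (s n).card) with hℓdef
    have hℓinf : ℵ₀ ≤ ℓ := by
      rw [hℓdef, ← Cardinal.lift_aleph0.{1,0}]
      exact Cardinal.lift_le.mpr le_sup_left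
    have hbase : ∀ γ : Ordinal, #(Stmt11Aux.base g s n γ) ≤ ℓ := by
      intro γ
      calc #(Stmt11Aux.base g s n γ) ≤ #(Set.Iio (s n)) := Cardinal.mk_image_le
        _ = Cardinal.lift.{1} (s n).card := Ordinal.mk_Iio_ordinal (s n)
        _ ≤ ℓ := Cardinal.lift_le.mpr le_sup_right
    have hsubset : {α : Ordinal | α < β ∧ Stmt11Aux.dfn g s α β ≤ n} ⊆
        Stmt11Aux.C g s n β := by
      rintro α ⟨h1, h2⟩
      exact Stmt11Aux.mem_of_dfn_le g s hsmono (htot α β h1 hβ) h2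
    calc #{α : Ordinal // α < β ∧ Stmt11Aux.dfn g s α β ≤ n}
        ≤ #(Stmt11Aux.C g s n β) := Cardinal.mk_le_mk_of_subset hsubset
      _ ≤ ℓ := Stmt11Aux.mk_C_le g s hℓinf hbase β
      _ < Cardinal.lift.{1,0} kap := by
          rw [hℓdef, Cardinal.lift_lt]
          exact max_lt hsing (Cardinal.lt_ord.mp (hsK n))
  · -- SubadditiveFn
    intro α β γ hαβ hβγ hγ
    have hblam : β < (Order.succ kap).ord := hβγ.trans hγ
    have h1 := htot α β hαβ hblam
    have h2 := htot β γ hβγ hγ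
    set N := max (Stmt11Aux.dfn g s α β) (Stmt11Aux.dfn g s β γ) with hN
    have hα : α ∈ Stmt11Aux.C g s N β :=
      Stmt11Aux.mem_of_dfn_le g s hsmono h1 (le_max_left _ _)
    have hβ' : β ∈ Stmt11Aux.C g s N γ :=
      Stmt11Aux.mem_of_dfn_le g s hsmono h2 (le_max_right _ _)
    exact Stmt11Aux.dfn_le g s (Stmt11Aux.C_trans g s hβ' hα)
end

section
/- Let λ be regular uncountable and suppose 𝕊 * 𝕋̇ is a two-step iteration such that the set of pairs (s, ṫ) for which there exists t* in the ground model with s ⊩ ṫ = t* is dense in 𝕊 * 𝕋̇ and is λ-closed. Then 𝕊 is λ-distributive and ⊩_𝕊 "𝕋̇ is λ-distributive". -/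
/-- A subset of a forcing poset is dense open if every condition has an extension in it
and it is closed under extensions. -/
def DenseOpen {P : Type} [Preorder P] (D : Set P) : Prop :=
  (∀ p : P, ∃ q ∈ D, q ≤ p) ∧ ∀ p ∈ D, ∀ q : P, q ≤ p → q ∈ D

/-- A forcing poset is λ-distributive if the intersection of fewer than λ dense open
subsets is dense open. -/
def IsDistrib (P : Type) [Preorder P] (μ : Cardinal) : Prop :=
  ∀ (ι : Type) (D : ι → Set P), Cardinal.mk ι < μ →
    (∀ i, DenseOpen (D i)) → DenseOpen (⋂ i, D i)

lemma key_meet {lam : Cardinal} {P : Type} [Preorder P]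
    (D : Set P)
    (hDdense : ∀ p : P, ∃ q ∈ D, q ≤ p)
    (hDclosed : ∀ β < lam.ord, ∀ f : Ordinal → P,
      (∀ γ < β, f γ ∈ D) → (∀ γ δ : Ordinal, γ ≤ δ → δ < β → f δ ≤ f γ) →
      ∃ q ∈ D, ∀ γ < β, q ≤ f γ)
    (ι : Type) (F : ι → Set P) (hι : Cardinal.mk ι < lam)
    (hF : ∀ i, DenseOpen (F i)) (p : P) :
    ∃ q : P, q ≤ p ∧ q ∈ D ∧ ∀ i, q ∈ F i := by
  by_cases hne : Nonempty ι
  · obtain ⟨p₀, hp₀D, hp₀p⟩ := hDdense p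
    set b : Ordinal := (Cardinal.mk ι).ord with hbdef
    have hb : b < lam.ord := Cardinal.ord_lt_ord.mpr hι
    obtain ⟨eqv⟩ : Nonempty (b.ToType ≃ ι) :=
      Cardinal.eq.mp (by rw [Cardinal.mk_toType, hbdef, Cardinal.card_ord])
    have : Inhabited ι := Classical.inhabited_of_nonempty hne
    set e : Ordinal → ι := fun γ =>
      if h : γ < b then eqv ((Ordinal.ToType.mk (o := b)) ⟨γ, h⟩) else default with hedef
    have hesurj : ∀ i : ι, ∃ γ, γ < b ∧ e γ = i := by
      intro i
      set x := (Ordinal.ToType.mk (o := b)).symm (eqv.symm i) with hxdef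
      refine ⟨x.1, x.2, ?_⟩
      rw [hedef]
      dsimp only
      rw [dif_pos (show (x:Ordinal) < b from x.2), Subtype.coe_eta, hxdef, OrderIso.apply_symm_apply,
        Equiv.apply_symm_apply]
    classical
    let f : Ordinal → P := WellFounded.fix wellFounded_lt (fun β ih =>
      if h : ∃ q, q ∈ D ∧ q ≤ p₀ ∧ (∀ γ (hγ : γ < β), q ≤ ih γ hγ) ∧ (β < b → q ∈ F (e β))
      then h.choose else p₀)
    have hfix : ∀ β, f β = if h : ∃ q, q ∈ D ∧ q ≤ p₀ ∧ (∀ γ (_ : γ < β), q ≤ f γ) ∧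
        (β < b → q ∈ F (e β)) then h.choose else p₀ :=
      fun β => WellFounded.fix_eq _ _ _
    have main : ∀ β, β ≤ b → f β ∈ D ∧ f β ≤ p₀ ∧ (∀ γ, γ < β → f β ≤ f γ) ∧
        (β < b → f β ∈ F (e β)) := by
      intro β
      induction β using Ordinal.induction with
      | h β ih =>
        intro hβb
        have hex : ∃ q, q ∈ D ∧ q ≤ p₀ ∧ (∀ γ (_ : γ < β), q ≤ f γ) ∧
            (β < b → q ∈ F (e β)) := by
          obtain ⟨r, hrD, hr⟩ := hDclosed β (lt_of_le_of_lt hβb hb) f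
            (fun γ hγ => (ih γ hγ (le_of_lt (lt_of_lt_of_le hγ hβb))).1)
            (fun γ δ hγδ hδ => by
              rcases eq_or_lt_of_le hγδ with h | h
              · subst h; exact le_refl _
              · exact (ih δ hδ (le_of_lt (lt_of_lt_of_le hδ hβb))).2.2.1 γ h)
          have hr' : ∃ r', r' ∈ D ∧ r' ≤ p₀ ∧ ∀ γ < β, r' ≤ f γ := by
            rcases eq_or_ne β 0 with h0 | h0
            · exact ⟨p₀, hp₀D, le_refl _,
                fun γ hγ => absurd hγ (by simp [h0, not_lt_zero])⟩
            · have h0' : 0 < β := pos_iff_ne_zero.mpr h0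
              exact ⟨r, hrD,
                le_trans (hr 0 h0') (ih 0 h0' (le_of_lt (lt_of_lt_of_le h0' hβb))).2.1, hr⟩
          obtain ⟨r', hr'D, hr'p₀, hr'f⟩ := hr'
          by_cases hβlt : β < b
          · obtain ⟨t, htF, htr⟩ := (hF (e β)).1 r'
            obtain ⟨q, hqD, hqt⟩ := hDdense t
            exact ⟨q, hqD, le_trans (le_trans hqt htr) hr'p₀,
              fun γ hγ => le_trans (le_trans hqt htr) (hr'f γ hγ),
              fun _ => (hF (e β)).2 t htF q hqt⟩
          · exact ⟨r', hr'D, hr'p₀, fun γ hγ => hr'f γ hγ, fun h => absurd h hβlt⟩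
        rw [hfix β, dif_pos hex]
        exact hex.choose_spec
    obtain ⟨hbD, hbp₀, hbdec, -⟩ := main b le_rfl
    refine ⟨f b, le_trans hbp₀ hp₀p, hbD, fun i => ?_⟩
    obtain ⟨γ, hγb, hγe⟩ := hesurj i
    have hγF : f γ ∈ F i := hγe ▸ (main γ (le_of_lt hγb)).2.2.2 hγb
    exact (hF i).2 (f γ) hγF (f b) (hbdec γ hγb)
  · obtain ⟨q, hqD, hqp⟩ := hDdense p
    exact ⟨q, hqp, hqD, fun i => absurd ⟨i⟩ hne⟩

/-- Let λ be regular uncountable and let P = 𝕊 * 𝕋̇ be a two-step iteration, presented as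
a poset P with a projection π onto 𝕊 (here S), such that the set D of conditions (s, ṫ)
whose second coordinate is decided (s ⊩ ṫ = t* for some ground-model t*) is dense in P
and λ-closed.  Then 𝕊 is λ-distributive, and 𝕊 forces 𝕋̇ to be λ-distributive: for every
𝕊-generic filter G, fewer than λ many (ground-model-coded) dense open subsets of the
quotient 𝕋 can be simultaneously met below any condition of the quotient. -/
theorem stmt16 (lam : Cardinal) (hreg : lam.IsRegular) (hunc : Cardinal.aleph0 < lam)
    (P S : Type) [Preorder P] [Preorder S] [OrderTop P] [OrderTop S]
    (π : P → S) (hπmono : Monotone π) (hπtop : π ⊤ = ⊤)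
    (hπproj : ∀ p : P, ∀ s : S, s ≤ π p → ∃ q : P, q ≤ p ∧ π q ≤ s)
    (hπsurj : Function.Surjective π)
    (D : Set P)
    (hDdense : ∀ p : P, ∃ q ∈ D, q ≤ p)
    (hDclosed : ∀ β < lam.ord, ∀ f : Ordinal → P,
      (∀ γ < β, f γ ∈ D) → (∀ γ δ : Ordinal, γ ≤ δ → δ < β → f δ ≤ f γ) →
      ∃ q ∈ D, ∀ γ < β, q ≤ f γ) :
    IsDistrib S lam ∧
    (∀ G : Set S,
      (∀ s ∈ G, ∀ s' : S, s ≤ s' → s' ∈ G) →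
      (∀ s₁ ∈ G, ∀ s₂ ∈ G, ∃ s₃ ∈ G, s₃ ≤ s₁ ∧ s₃ ≤ s₂) →
      (∀ E : Set S, (∀ s : S, ∃ t ∈ E, t ≤ s) → (G ∩ E).Nonempty) →
      ∀ (ι : Type) (F : ι → Set P), Cardinal.mk ι < lam → (∀ i, DenseOpen (F i)) →
        ∀ p : P, π p ∈ G → ∃ q : P, q ≤ p ∧ π q ∈ G ∧ ∀ i, q ∈ F i) := by
  -- preimages of dense open sets on S are dense open on P
  have hpre : ∀ E : Set S, DenseOpen E → DenseOpen (π ⁻¹' E) := by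
    intro E hE
    constructor
    · intro p
      obtain ⟨s, hsE, hs⟩ := hE.1 (π p)
      obtain ⟨q, hqp, hqs⟩ := hπproj p s hs
      exact ⟨q, hE.2 s hsE (π q) hqs, hqp⟩
    · intro p hp q hq
      exact hE.2 (π p) hp (π q) (hπmono hq)
  constructor
  · -- S is λ-distributive
    intro ι E hι hE
    constructor
    · intro s
      obtain ⟨p, hp⟩ := hπsurj s
      obtain ⟨q, hqp, -, hqF⟩ := key_meet D hDdense hDclosed ι (fun i => π ⁻¹' (E i)) hι
        (fun i => hpre (E i) (hE i)) p
      exact ⟨π q, Set.mem_iInter.mpr (fun i => hqF i), hp ▸ hπmono hqp⟩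
    · intro s hs t ht
      exact Set.mem_iInter.mpr (fun i => (hE i).2 s (Set.mem_iInter.mp hs i) t ht)
  · -- the quotient is forced λ-distributive
    intro G hGup hGdir hGgen ι F hι hF p hpG
    set E : Set S := { s : S | (¬ ∃ t : S, t ≤ s ∧ t ≤ π p) ∨
      ∃ q : P, q ≤ p ∧ s ≤ π q ∧ ∀ i, q ∈ F i } with hEdef
    have hEdense : ∀ s : S, ∃ t ∈ E, t ≤ s := by
      intro s
      by_cases hc : ∃ t : S, t ≤ s ∧ t ≤ π p
      · obtain ⟨t, hts, htp⟩ := hc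
        obtain ⟨q₀, hq₀p, hq₀t⟩ := hπproj p t htp
        obtain ⟨q, hqq₀, -, hqF⟩ := key_meet D hDdense hDclosed ι F hι hF q₀
        exact ⟨π q, Or.inr ⟨q, le_trans hqq₀ hq₀p, le_refl _, hqF⟩,
          le_trans (hπmono hqq₀) (le_trans hq₀t hts)⟩
      · exact ⟨s, Or.inl hc, le_refl s⟩
    obtain ⟨s, hsG, hsE⟩ := hGgen E hEdense
    rcases hsE with hno | ⟨q, hqp, hsq, hqF⟩
    · obtain ⟨s₃, -, h₁, h₂⟩ := hGdir s hsG (π p) hpG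
      exact absurd ⟨s₃, h₁, h₂⟩ hno
    · exact ⟨q, hqp, hGup s hsG (π q) hsq, hqF⟩
end
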